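/- For every continuously differentiable, compactly supported function f : ℝ³ → ℂ and every x ∈ ℝ³, one has ∫_{ℝ³} |f(y)|/|x−y|² dy ≤ ∫_{ℝ³} |∇f(y)|/|x−y| dy. In particular sup_{x ∈ ℝ³} ∫_{ℝ³} |f(y)|/|x−y|² dy ≤ ‖∇f‖_K, where ‖·‖_K is the Kato norm. -/

import Mathlib

set_option autoImplicit false

open MeasureTheory ENNReal

noncomputable section

/-- `ℝ³` as a Euclidean space. -/
abbrev R3 : Type := EuclideanSpace ℝ (Fin 3)

/-- The (global) Kato norm of a function `V` on `ℝ³`: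
`‖V‖_K = sup_y ∫ |V(x)| / |x - y| dx`. -/
def katoNorm {E : Type*} [NormedAddCommGroup E] (V : R3 → E) : ℝ≥0∞ :=
  ⨆ y : R3, ∫⁻ x : R3, (‖V x‖₊ : ℝ≥0∞) / (‖x - y‖₊ : ℝ≥0∞)

open Set Metric

lemma ofReal_norm_eq_coe_nnnorm {E : Type*} [SeminormedAddCommGroup E] (a : E) :
    ENNReal.ofReal ‖a‖ = (‖a‖₊ : ℝ≥0∞) := ofReal_norm a

namespace KatoSob

/-- Polar coordinates for lower integrals on `ℝ³`. -/
lemma polar_lintegral (φ : R3 → ℝ≥0∞) (hφ : Measurable φ) :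
    ∫⁻ z : R3, φ z = ∫⁻ ω : sphere (0:R3) 1, (∫⁻ r in Ioi (0:ℝ),
      ENNReal.ofReal (r ^ 2) * φ (r • (ω : R3))) ∂(volume : Measure R3).toSphere := by
  have h0 : (∫⁻ z : R3, φ z)
      = ∫⁻ z : ({0}ᶜ : Set R3), φ z ∂((volume : Measure R3).comap Subtype.val) := by
    rw [lintegral_subtype_comap (measurableSet_singleton (0:R3)).compl,
      MeasureTheory.restrict_compl_singleton]
  have hmp := (volume : Measure R3).measurePreserving_homeomorphUnitSphereProd
  simp only [finrank_euclideanSpace_fin] at hmp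
  set h := homeomorphUnitSphereProd R3 with hh
  have hg : Measurable fun p : sphere (0:R3) 1 × Ioi (0:ℝ) => φ ((p.2 : ℝ) • (p.1 : R3)) :=
    hφ.comp ((continuous_subtype_val.comp continuous_snd).smul
      (continuous_subtype_val.comp continuous_fst)).measurable
  have h1 : (∫⁻ z : ({0}ᶜ : Set R3), φ z ∂((volume : Measure R3).comap Subtype.val))
      = ∫⁻ p : sphere (0:R3) 1 × Ioi (0:ℝ), φ ((p.2 : ℝ) • (p.1 : R3))
          ∂((volume : Measure R3).toSphere.prod (.volumeIoiPow 2)) := by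
    rw [← hmp.lintegral_comp hg]
    refine lintegral_congr fun z => ?_
    have hz : (z : R3) ≠ 0 := z.2
    congr 1
    simp [hh, smul_smul, mul_inv_cancel₀ (norm_ne_zero_iff.2 hz)]
  rw [h0, h1, lintegral_prod _ hg.aemeasurable]
  refine lintegral_congr fun ω => ?_
  rw [Measure.volumeIoiPow]
  exact (lintegral_withDensity_eq_lintegral_mul _
    ((measurable_subtype_coe.pow_const _).ennreal_ofReal)
    (hφ.comp (continuous_subtype_val.smul continuous_const).measurable)).trans
    (lintegral_subtype_comap measurableSet_Ioi
      (fun r : ℝ => ENNReal.ofReal (r ^ 2) * φ (r • (ω : R3))))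

/-- Fubini: `∫_{s>0} ∫_{r>s} F r dr ds = ∫_{r>0} r · F r dr`. -/
lemma fub (F : ℝ → ℝ≥0∞) (hF : Measurable F) :
    ∫⁻ s in Ioi (0:ℝ), ∫⁻ r in Ioi s, F r
      = ∫⁻ r in Ioi (0:ℝ), ENNReal.ofReal r * F r := by
  have h1 : ∀ s : ℝ, (∫⁻ r in Ioi s, F r) = ∫⁻ r, if s < r then F r else 0 := by
    intro s
    rw [← lintegral_indicator measurableSet_Ioi]
    exact lintegral_congr fun r => by simp [indicator_apply, mem_Ioi]
  simp_rw [h1]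
  rw [lintegral_lintegral_swap]
  · have h2 : ∀ r : ℝ, (∫⁻ s in Ioi (0:ℝ), if s < r then F r else 0)
        = F r * ENNReal.ofReal r := by
      intro r
      have : (fun s : ℝ => if s < r then F r else 0)
          = (Iio r).indicator (fun _ => F r) := by
        funext s; simp [indicator_apply, mem_Iio]
      rw [this, lintegral_indicator measurableSet_Iio,
        Measure.restrict_restrict measurableSet_Iio, setLIntegral_const,
        inter_comm, Ioi_inter_Iio, Real.volume_Ioo, sub_zero]
    calc (∫⁻ r, ∫⁻ s in Ioi (0:ℝ), if s < r then F r else 0)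
        = ∫⁻ r, F r * ENNReal.ofReal r := lintegral_congr h2
      _ = (∫⁻ r in Ioi (0:ℝ), F r * ENNReal.ofReal r)
            + ∫⁻ r in (Ioi (0:ℝ))ᶜ, F r * ENNReal.ofReal r :=
          (lintegral_add_compl _ measurableSet_Ioi).symm
      _ = ∫⁻ r in Ioi (0:ℝ), ENNReal.ofReal r * F r := by
          rw [compl_Ioi]
          have : (∫⁻ r in Iic (0:ℝ), F r * ENNReal.ofReal r) = ∫⁻ r in Iic (0:ℝ), 0 := by
            refine setLIntegral_congr_fun measurableSet_Iic (fun r hr => ?_)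
            simp [ENNReal.ofReal_eq_zero.2 hr]
          simp only [this, lintegral_zero, add_zero]
          exact lintegral_congr fun r => mul_comm _ _
  · exact (Measurable.ite (measurableSet_lt measurable_fst measurable_snd)
      (hF.comp measurable_snd) measurable_const).aemeasurable

variable {f : R3 → ℂ}

/-- Fundamental theorem of calculus along rays. -/
lemma line_bound (hf : ContDiff ℝ 1 f) (hsupp : HasCompactSupport f) (x ω : R3) (hω : ‖ω‖ = 1) (s : ℝ) :
    (‖f (x + s • ω)‖₊ : ℝ≥0∞) ≤ ∫⁻ r in Ioi s, (‖fderiv ℝ f (x + r • ω)‖₊ : ℝ≥0∞) := by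
  obtain ⟨M, hM⟩ := hsupp.isBounded.subset_closedBall 0
  set M' := max M 0 with hM'
  have hM'' : tsupport f ⊆ closedBall 0 M' :=
    hM.trans (closedBall_subset_closedBall (le_max_left _ _))
  set T := max s (‖x‖ + M' + 1) with hT
  have hsT : s ≤ T := le_max_left _ _
  set h : ℝ → ℂ := fun t => f (x + t • ω) with hhdef
  set h' : ℝ → ℂ := fun t => fderiv ℝ f (x + t • ω) ω with hh'def
  have hline : Continuous fun t : ℝ => x + t • ω := by continuity
  have hderiv : ∀ t : ℝ, HasDerivAt h (h' t) t := by
    intro t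
    have h1 : HasDerivAt (fun t : ℝ => x + t • ω) ω t := by
      simpa using ((hasDerivAt_id t).smul_const ω).const_add x
    exact (hf.differentiable one_ne_zero (x + t • ω)).hasFDerivAt.comp_hasDerivAt t h1
  have hnm : x + T • ω ∉ tsupport f := by
    intro hmem
    have h2 := mem_closedBall_zero_iff.1 (hM'' hmem)
    have h3 : T - ‖x‖ ≤ ‖x + T • ω‖ := by
      have h4 : ‖T • ω‖ = |T| := by rw [norm_smul, hω, mul_one]; rfl
      have h5 : T ≤ |T| := le_abs_self T
      have h6 := norm_sub_norm_le (T • ω) (x + T • ω)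
      rw [show T • ω - (x + T • ω) = -x by abel, norm_neg] at h6
      linarith
    have hTge : ‖x‖ + M' + 1 ≤ T := le_max_right _ _
    linarith
  have hT0 : h T = 0 := by
    show f (x + T • ω) = 0
    exact image_eq_zero_of_notMem_tsupport hnm
  have hcontD : Continuous fun y : R3 => fderiv ℝ f y := hf.continuous_fderiv one_ne_zero
  have hconth' : Continuous h' := (hcontD.comp hline).clm_apply continuous_const
  have hftc : ∫ t in s..T, h' t = h T - h s :=
    intervalIntegral.integral_eq_sub_of_hasDerivAt (fun t _ => hderiv t)
      (hconth'.intervalIntegrable s T)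
  have hnorm : ‖h s‖ ≤ ∫ t in s..T, ‖fderiv ℝ f (x + t • ω)‖ := by
    have h6 : ‖h s‖ = ‖∫ t in s..T, h' t‖ := by rw [hftc, hT0, zero_sub, norm_neg]
    rw [h6]
    refine (intervalIntegral.norm_integral_le_integral_norm hsT).trans ?_
    refine intervalIntegral.integral_mono_on hsT
      (hconth'.norm.intervalIntegrable s T)
      (((hcontD.comp hline).norm).intervalIntegrable s T) fun t _ => ?_
    calc ‖h' t‖ ≤ ‖fderiv ℝ f (x + t • ω)‖ * ‖ω‖ :=
          (fderiv ℝ f (x + t • ω)).le_opNorm ω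
      _ = ‖fderiv ℝ f (x + t • ω)‖ := by rw [hω, mul_one]
  calc (‖f (x + s • ω)‖₊ : ℝ≥0∞) = ENNReal.ofReal ‖h s‖ :=
        (ofReal_norm_eq_coe_nnnorm _).symm
    _ ≤ ENNReal.ofReal (∫ t in s..T, ‖fderiv ℝ f (x + t • ω)‖) :=
        ENNReal.ofReal_le_ofReal hnorm
    _ = ∫⁻ t in Ioc s T, ENNReal.ofReal ‖fderiv ℝ f (x + t • ω)‖ := by
        rw [intervalIntegral.integral_of_le hsT]
        exact ofReal_integral_eq_lintegral_ofReal
          (((hcontD.comp hline).norm).integrableOn_Ioc)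
          (ae_of_all _ fun t => norm_nonneg _)
    _ = ∫⁻ t in Ioc s T, (‖fderiv ℝ f (x + t • ω)‖₊ : ℝ≥0∞) := by
        simp_rw [ofReal_norm_eq_coe_nnnorm]
    _ ≤ ∫⁻ r in Ioi s, (‖fderiv ℝ f (x + r • ω)‖₊ : ℝ≥0∞) :=
        lintegral_mono_set Ioc_subset_Ioi_self

/-- Polar form of the left-hand side. -/
lemma polar_L (hf : ContDiff ℝ 1 f) (x : R3) :
    (∫⁻ y : R3, (‖f y‖₊ : ℝ≥0∞) / (‖x - y‖₊ : ℝ≥0∞) ^ 2)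
      = ∫⁻ ω : sphere (0:R3) 1, (∫⁻ r in Ioi (0:ℝ),
          (‖f (x + r • (ω : R3))‖₊ : ℝ≥0∞)) ∂(volume : Measure R3).toSphere := by
  have hfm : Measurable f := hf.continuous.measurable
  have hφm : Measurable fun z : R3 => (‖f (x + z)‖₊ : ℝ≥0∞) / (‖z‖₊ : ℝ≥0∞) ^ 2 :=
    ((hfm.comp (measurable_const_add x)).nnnorm.coe_nnreal_ennreal).div
      ((continuous_nnnorm.measurable.coe_nnreal_ennreal).pow_const 2)
  have t1 : (∫⁻ y : R3, (‖f y‖₊ : ℝ≥0∞) / (‖x - y‖₊ : ℝ≥0∞) ^ 2)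
      = ∫⁻ z : R3, (‖f (x + z)‖₊ : ℝ≥0∞) / (‖z‖₊ : ℝ≥0∞) ^ 2 := by
    rw [← lintegral_add_right_eq_self
      (fun y : R3 => (‖f y‖₊ : ℝ≥0∞) / (‖x - y‖₊ : ℝ≥0∞) ^ 2) x]
    refine lintegral_congr fun z => ?_
    rw [show z + x = x + z from add_comm z x, show x - (x + z) = -z by abel, nnnorm_neg]
  rw [t1, polar_lintegral _ hφm]
  refine lintegral_congr fun ω => ?_
  refine setLIntegral_congr_fun measurableSet_Ioi (fun r hr => ?_)
  have hr : (0:ℝ) < r := hr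
  have hω1 : ‖(ω : R3)‖ = 1 := mem_sphere_zero_iff_norm.1 ω.2
  have hc : (‖r • (ω : R3)‖₊ : ℝ≥0∞) = ENNReal.ofReal r := by
    rw [← ofReal_norm_eq_coe_nnnorm, norm_smul, hω1, mul_one, Real.norm_eq_abs,
      abs_of_pos hr]
  rw [hc, ENNReal.ofReal_pow hr.le,
    ENNReal.mul_div_cancel (pow_ne_zero 2 (ENNReal.ofReal_pos.2 hr).ne')
      (ENNReal.pow_ne_top ENNReal.ofReal_ne_top)]

/-- Polar form of the right-hand side. -/
lemma polar_R (hf : ContDiff ℝ 1 f) (x : R3) :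
    (∫⁻ y : R3, (‖fderiv ℝ f y‖₊ : ℝ≥0∞) / (‖x - y‖₊ : ℝ≥0∞))
      = ∫⁻ ω : sphere (0:R3) 1, (∫⁻ r in Ioi (0:ℝ),
          ENNReal.ofReal r * (‖fderiv ℝ f (x + r • (ω : R3))‖₊ : ℝ≥0∞))
            ∂(volume : Measure R3).toSphere := by
  have hDm : Measurable fun y : R3 => fderiv ℝ f y :=
    (hf.continuous_fderiv one_ne_zero).measurable
  have hφm : Measurable fun z : R3 => (‖fderiv ℝ f (x + z)‖₊ : ℝ≥0∞) / (‖z‖₊ : ℝ≥0∞) :=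
    ((hDm.comp (measurable_const_add x)).nnnorm.coe_nnreal_ennreal).div
      (continuous_nnnorm.measurable.coe_nnreal_ennreal)
  have t1 : (∫⁻ y : R3, (‖fderiv ℝ f y‖₊ : ℝ≥0∞) / (‖x - y‖₊ : ℝ≥0∞))
      = ∫⁻ z : R3, (‖fderiv ℝ f (x + z)‖₊ : ℝ≥0∞) / (‖z‖₊ : ℝ≥0∞) := by
    rw [← lintegral_add_right_eq_self
      (fun y : R3 => (‖fderiv ℝ f y‖₊ : ℝ≥0∞) / (‖x - y‖₊ : ℝ≥0∞)) x]
    refine lintegral_congr fun z => ?_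
    rw [show z + x = x + z from add_comm z x, show x - (x + z) = -z by abel, nnnorm_neg]
  rw [t1, polar_lintegral _ hφm]
  refine lintegral_congr fun ω => ?_
  refine setLIntegral_congr_fun measurableSet_Ioi (fun r hr => ?_)
  have hr : (0:ℝ) < r := hr
  have hω1 : ‖(ω : R3)‖ = 1 := mem_sphere_zero_iff_norm.1 ω.2
  have hc : (‖r • (ω : R3)‖₊ : ℝ≥0∞) = ENNReal.ofReal r := by
    rw [← ofReal_norm_eq_coe_nnnorm, norm_smul, hω1, mul_one, Real.norm_eq_abs,
      abs_of_pos hr]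
  rw [hc, ENNReal.ofReal_pow hr.le, sq, mul_assoc,
    ENNReal.mul_div_cancel (ENNReal.ofReal_pos.2 hr).ne' ENNReal.ofReal_ne_top]

/-- The main lower-integral inequality. -/
lemma main_ineq (hf : ContDiff ℝ 1 f) (hsupp : HasCompactSupport f) (x : R3) :
    (∫⁻ y : R3, (‖f y‖₊ : ℝ≥0∞) / (‖x - y‖₊ : ℝ≥0∞) ^ 2)
      ≤ ∫⁻ y : R3, (‖fderiv ℝ f y‖₊ : ℝ≥0∞) / (‖x - y‖₊ : ℝ≥0∞) := by
  rw [polar_L hf x, polar_R hf x]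
  refine lintegral_mono fun ω => ?_
  have hω1 : ‖(ω : R3)‖ = 1 := mem_sphere_zero_iff_norm.1 ω.2
  have hDm : Measurable fun r : ℝ => (‖fderiv ℝ f (x + r • (ω : R3))‖₊ : ℝ≥0∞) :=
    (((hf.continuous_fderiv one_ne_zero).comp (by continuity)).measurable).nnnorm.coe_nnreal_ennreal
  calc (∫⁻ r in Ioi (0:ℝ), (‖f (x + r • (ω : R3))‖₊ : ℝ≥0∞))
      ≤ ∫⁻ s in Ioi (0:ℝ), ∫⁻ r in Ioi s, (‖fderiv ℝ f (x + r • (ω : R3))‖₊ : ℝ≥0∞) :=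
        lintegral_mono' le_rfl fun s => line_bound hf hsupp x ω hω1 s
    _ = ∫⁻ r in Ioi (0:ℝ), ENNReal.ofReal r * (‖fderiv ℝ f (x + r • (ω : R3))‖₊ : ℝ≥0∞) :=
        fub _ hDm

/-- Finiteness of the right-hand side. -/
lemma fin_R (hf : ContDiff ℝ 1 f) (hsupp : HasCompactSupport f) (x : R3) :
    (∫⁻ y : R3, (‖fderiv ℝ f y‖₊ : ℝ≥0∞) / (‖x - y‖₊ : ℝ≥0∞)) < ⊤ := by
  have hcontD : Continuous fun y : R3 => fderiv ℝ f y := hf.continuous_fderiv one_ne_zero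
  obtain ⟨C, hC⟩ := (hsupp.fderiv ℝ).exists_bound_of_continuous hcontD
  obtain ⟨M, hM⟩ := (hsupp.fderiv ℝ).isBounded.subset_closedBall 0
  set M' := max M 0 with hM'
  have hM'' : tsupport (fderiv ℝ f) ⊆ closedBall 0 M' :=
    hM.trans (closedBall_subset_closedBall (le_max_left _ _))
  set R₀ : ℝ := ‖x‖ + M' + 1 with hR₀
  set K : ℝ≥0∞ := ENNReal.ofReal R₀ * ENNReal.ofReal C with hK
  rw [polar_R hf x]
  have hZ : ∀ ω : sphere (0:R3) 1,
      (∫⁻ r in Ioi (0:ℝ), ENNReal.ofReal r * (‖fderiv ℝ f (x + r • (ω : R3))‖₊ : ℝ≥0∞))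
        ≤ K * volume (Ioc (0:ℝ) R₀) := by
    intro ω
    have hω1 : ‖(ω : R3)‖ = 1 := mem_sphere_zero_iff_norm.1 ω.2
    have hbd : ∀ r ∈ Ioi (0:ℝ),
        ENNReal.ofReal r * (‖fderiv ℝ f (x + r • (ω : R3))‖₊ : ℝ≥0∞)
          ≤ (Ioc (0:ℝ) R₀).indicator (fun _ => K) r := by
      intro r hr
      have hr : (0:ℝ) < r := hr
      by_cases hrR : r ≤ R₀
      · rw [indicator_of_mem (Set.mem_Ioc.2 ⟨hr, hrR⟩)]
        refine mul_le_mul' (ENNReal.ofReal_le_ofReal hrR) ?_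
        rw [← ofReal_norm_eq_coe_nnnorm]
        exact ENNReal.ofReal_le_ofReal (hC _)
      · push_neg at hrR
        have hzero : fderiv ℝ f (x + r • (ω : R3)) = 0 := by
          apply image_eq_zero_of_notMem_tsupport
          intro hmem
          have h2 := mem_closedBall_zero_iff.1 (hM'' hmem)
          have h3 : r - ‖x‖ ≤ ‖x + r • (ω : R3)‖ := by
            have h4 : ‖r • (ω : R3)‖ = |r| := by rw [norm_smul, hω1, mul_one]; rfl
            have h6 := norm_sub_norm_le (r • (ω : R3)) (x + r • (ω : R3))
            rw [show r • (ω : R3) - (x + r • (ω : R3)) = -x by abel, norm_neg, h4,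
              abs_of_pos hr] at h6
            linarith
          have : ‖x‖ + M' + 1 < r := hrR
          linarith
        rw [indicator_of_notMem (fun hmem => hrR.not_ge hmem.2), hzero]
        simp
    calc (∫⁻ r in Ioi (0:ℝ), ENNReal.ofReal r * (‖fderiv ℝ f (x + r • (ω : R3))‖₊ : ℝ≥0∞))
        ≤ ∫⁻ r in Ioi (0:ℝ), (Ioc (0:ℝ) R₀).indicator (fun _ => K) r :=
          setLIntegral_mono' measurableSet_Ioi hbd
      _ ≤ ∫⁻ r, (Ioc (0:ℝ) R₀).indicator (fun _ => K) r :=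
          lintegral_mono' Measure.restrict_le_self le_rfl
      _ = K * volume (Ioc (0:ℝ) R₀) := by
          rw [lintegral_indicator measurableSet_Ioc, setLIntegral_const]
  calc (∫⁻ ω : sphere (0:R3) 1, (∫⁻ r in Ioi (0:ℝ),
        ENNReal.ofReal r * (‖fderiv ℝ f (x + r • (ω : R3))‖₊ : ℝ≥0∞))
          ∂(volume : Measure R3).toSphere)
      ≤ ∫⁻ _ : sphere (0:R3) 1, K * volume (Ioc (0:ℝ) R₀)
          ∂(volume : Measure R3).toSphere := lintegral_mono hZ
    _ = K * volume (Ioc (0:ℝ) R₀) * ((volume : Measure R3).toSphere univ) :=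
        lintegral_const _
    _ < ⊤ := by
        refine ENNReal.mul_lt_top (ENNReal.mul_lt_top ?_ ?_) (measure_lt_top _ _)
        · exact ENNReal.mul_lt_top ENNReal.ofReal_lt_top ENNReal.ofReal_lt_top
        · rw [Real.volume_Ioc]; exact ENNReal.ofReal_lt_top

end KatoSob

theorem kato_sob (f : R3 → ℂ) (hf : ContDiff ℝ 1 f) (hsupp : HasCompactSupport f) :
    (∀ x : R3, ∫ y : R3, ‖f y‖ / ‖x - y‖ ^ 2 ≤ ∫ y : R3, ‖fderiv ℝ f y‖ / ‖x - y‖) ∧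
    (⨆ x : R3, ∫⁻ y : R3, (‖f y‖₊ : ℝ≥0∞) / (‖x - y‖₊ : ℝ≥0∞) ^ 2) ≤
      katoNorm (fun y => fderiv ℝ f y) := by
  constructor
  · intro x
    have hae : ∀ᵐ (y : R3), y ≠ x := by
      refine (ae_iff).2 ?_
      have : {y : R3 | ¬ y ≠ x} = {x} := by ext y; simp
      rw [this]; exact measure_singleton x
    have hmL : AEStronglyMeasurable (fun y : R3 => ‖f y‖ / ‖x - y‖ ^ 2) volume :=
      ((hf.continuous.norm.measurable).div
        (((continuous_const.sub continuous_id).norm.pow 2).measurable)).aestronglyMeasurable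
    have hmR : AEStronglyMeasurable (fun y : R3 => ‖fderiv ℝ f y‖ / ‖x - y‖) volume :=
      (((hf.continuous_fderiv one_ne_zero).norm.measurable).div
        ((continuous_const.sub continuous_id).norm.measurable)).aestronglyMeasurable
    have hEqL : (∫⁻ y : R3, ENNReal.ofReal (‖f y‖ / ‖x - y‖ ^ 2))
        = ∫⁻ y : R3, (‖f y‖₊ : ℝ≥0∞) / (‖x - y‖₊ : ℝ≥0∞) ^ 2 := by
      refine lintegral_congr_ae (hae.mono fun y hy => ?_)
      have hxy : (0:ℝ) < ‖x - y‖ := norm_pos_iff.2 (sub_ne_zero.2 (Ne.symm hy))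
      dsimp only
      rw [ENNReal.ofReal_div_of_pos (by positivity), ENNReal.ofReal_pow (norm_nonneg _),
        ofReal_norm_eq_coe_nnnorm, ofReal_norm_eq_coe_nnnorm]
    have hEqR : (∫⁻ y : R3, ENNReal.ofReal (‖fderiv ℝ f y‖ / ‖x - y‖))
        = ∫⁻ y : R3, (‖fderiv ℝ f y‖₊ : ℝ≥0∞) / (‖x - y‖₊ : ℝ≥0∞) := by
      refine lintegral_congr_ae (hae.mono fun y hy => ?_)
      have hxy : (0:ℝ) < ‖x - y‖ := norm_pos_iff.2 (sub_ne_zero.2 (Ne.symm hy))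
      dsimp only
      rw [ENNReal.ofReal_div_of_pos hxy, ofReal_norm_eq_coe_nnnorm,
        ofReal_norm_eq_coe_nnnorm]
    rw [integral_eq_lintegral_of_nonneg_ae (ae_of_all _ fun y => by positivity) hmL,
      integral_eq_lintegral_of_nonneg_ae (ae_of_all _ fun y => by positivity) hmR,
      hEqL, hEqR]
    exact ENNReal.toReal_mono (KatoSob.fin_R hf hsupp x).ne (KatoSob.main_ineq hf hsupp x)
  · refine iSup_le fun x => le_iSup_of_le x ?_
    refine (KatoSob.main_ineq hf hsupp x).trans (le_of_eq ?_)
    exact lintegral_congr fun y => by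
      rw [show (‖x - y‖₊ : NNReal) = ‖y - x‖₊ from by rw [← neg_sub y x, nnnorm_neg]]
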